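/- arXiv:2408.12573 — 3 statements merged into one kernel-verified Lean document; each statement's English description precedes it below -/
import Mathlib

section
/- Let λ, γ > 0 and let y : ℝ → ℝ be continuous. Suppose x̂₂ : ℝ → ℝ solves x̂₂'(t) = -λ x̂₂(t) + γ|y(t)| and a : ℝ → ℝ is differentiable with a(t) ≥ 0 and a'(t) ≤ -λ a(t) + γ|y(t)| for all t ≥ 0. Then a(t) ≤ |x̂₂(t)| + e^{-λt}(a(0) + |x̂₂(0)|) for all t ≥ 0. -/
open Real

theorem stmt1 (lam γ : ℝ) (hlam : 0 < lam) (hγ : 0 < γ)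
    (y : ℝ → ℝ) (hy : Continuous y)
    (xh2 a : ℝ → ℝ)
    (hxh : ∀ t, HasDerivAt xh2 (-lam * xh2 t + γ * |y t|) t)
    (ha : Differentiable ℝ a)
    (hapos : ∀ t, 0 ≤ t → 0 ≤ a t)
    (hda : ∀ t, 0 ≤ t → deriv a t ≤ -lam * a t + γ * |y t|) :
    ∀ t, 0 ≤ t → a t ≤ |xh2 t| + Real.exp (-lam * t) * (a 0 + |xh2 0|) := by
  set e : ℝ → ℝ := fun t => (a t - xh2 t) * Real.exp (lam * t) with he
  have hde : ∀ t, HasDerivAt e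
      ((deriv a t - (-lam * xh2 t + γ * |y t|)) * Real.exp (lam * t)
        + (a t - xh2 t) * (lam * Real.exp (lam * t))) t := by
    intro t
    have h1 : HasDerivAt (fun t => a t - xh2 t)
        (deriv a t - (-lam * xh2 t + γ * |y t|)) t :=
      ((ha t).hasDerivAt).sub (hxh t)
    have h2 : HasDerivAt (fun t => Real.exp (lam * t)) (lam * Real.exp (lam * t)) t := by
      have := (Real.hasDerivAt_exp (lam * t)).comp t
        ((hasDerivAt_id t).const_mul lam)
      simpa [mul_comm, Function.comp_def] using this
    exact h1.mul h2
  have hdiff : Differentiable ℝ e := fun t => (hde t).differentiableAt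
  have hmono : AntitoneOn e (Set.Ici (0 : ℝ)) := by
    apply antitoneOn_of_deriv_nonpos (convex_Ici 0) hdiff.continuous.continuousOn
      (fun t _ => (hdiff t).differentiableWithinAt)
    intro t ht
    simp only [interior_Ici, Set.mem_Ioi] at ht
    rw [(hde t).deriv]
    have h := hda t ht.le
    nlinarith [Real.exp_pos (lam * t)]
  intro t ht
  have h := hmono (Set.self_mem_Ici) ht ht
  simp only [he, mul_zero, Real.exp_zero, mul_one] at h
  have hexp : (0:ℝ) < Real.exp (lam * t) := Real.exp_pos _
  have hinv : Real.exp (-lam * t) = (Real.exp (lam * t))⁻¹ := by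
    rw [← Real.exp_neg]; ring_nf
  have h1 : a t - xh2 t ≤ (a 0 - xh2 0) * Real.exp (-lam * t) := by
    rw [hinv, le_div_iff₀ hexp |>.symm] at *
    rw [div_eq_mul_inv] at *
    nlinarith
  have h2 : xh2 t ≤ |xh2 t| := le_abs_self _
  have h3 : -xh2 0 ≤ |xh2 0| := neg_le_abs _
  have h4 : (0:ℝ) < Real.exp (-lam * t) := Real.exp_pos _
  nlinarith
end

section
/- Let σ, β_m, w_m, K > 0 and suppose x₂ : ℝ → ℝ solves x₂'(t) = -σ²β_m x₂(t) + (σ²β_m √w_m/√2) exp(-x₂(t)²/w_m) (x₁(t)/K) with 0 ≤ x₁(t) ≤ K. If |x₂(0)| ≤ √(w_m/2), then |x₂(t)| ≤ √(w_m/2) for all t ≥ 0. -/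
open Real

theorem stmt7 (σ βm wm K : ℝ) (hσ : 0 < σ) (hβ : 0 < βm) (hw : 0 < wm) (hK : 0 < K)
    (x₁ x₂ : ℝ → ℝ)
    (hx₁ : ∀ t, 0 ≤ x₁ t ∧ x₁ t ≤ K)
    (hx₂ : ∀ t, HasDerivAt x₂
      (-σ^2 * βm * x₂ t + (σ^2 * βm * Real.sqrt wm / Real.sqrt 2) *
        Real.exp (-(x₂ t)^2 / wm) * (x₁ t / K)) t)
    (h0 : |x₂ 0| ≤ Real.sqrt (wm / 2)) :
    ∀ t, 0 ≤ t → |x₂ t| ≤ Real.sqrt (wm / 2) := by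
  intro t ht
  set a : ℝ := σ^2 * βm with ha_def
  have ha : 0 < a := by positivity
  set M : ℝ := Real.sqrt (wm / 2) with hM_def
  have hM : 0 < M := Real.sqrt_pos.2 (by positivity)
  have hMeq : σ^2 * βm * Real.sqrt wm / Real.sqrt 2 = a * M := by
    rw [hM_def, ha_def, Real.sqrt_div hw.le, mul_div_assoc]
  set b : ℝ → ℝ := fun s => (σ^2 * βm * Real.sqrt wm / Real.sqrt 2) *
    Real.exp (-(x₂ s)^2 / wm) * (x₁ s / K) with hb_def
  have hb : ∀ s, 0 ≤ b s ∧ b s ≤ a * M := by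
    intro s
    obtain ⟨h1, h2⟩ := hx₁ s
    have he : Real.exp (-(x₂ s)^2 / wm) ≤ 1 := by
      have h3 : 0 ≤ (x₂ s)^2 / wm := by positivity
      have : -(x₂ s)^2 / wm ≤ 0 := by rw [neg_div]; linarith
      exact Real.exp_le_one_iff.mpr this
    have hr : x₁ s / K ≤ 1 := (div_le_one hK).2 h2
    have hepos : 0 < Real.exp (-(x₂ s)^2 / wm) := Real.exp_pos _
    constructor
    · have : 0 ≤ σ^2 * βm * Real.sqrt wm / Real.sqrt 2 := by positivity
      exact mul_nonneg (mul_nonneg this hepos.le) (div_nonneg h1 hK.le)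
    · rw [hb_def]
      simp only
      rw [hMeq]
      have hbase : 0 < a * M := by positivity
      calc a * M * Real.exp (-(x₂ s)^2 / wm) * (x₁ s / K)
          ≤ a * M * 1 * 1 := by
            apply mul_le_mul _ hr (div_nonneg h1 hK.le) (by positivity)
            exact mul_le_mul_of_nonneg_left he hbase.le
        _ = a * M := by ring
  -- derivative of exp(a s)
  have hexp : ∀ s : ℝ, HasDerivAt (fun u => Real.exp (a * u)) (Real.exp (a * s) * a) s := by
    intro s
    have h1 : HasDerivAt (fun u : ℝ => a * u) a s := by
      simpa using (hasDerivAt_id s).const_mul a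
    exact h1.exp
  have key : ∀ c : ℝ, (∀ s, Real.exp (a * s) * (b s - a * c) ≤ 0) →
      x₂ 0 - c ≤ 0 → x₂ t ≤ c := by
    intro c hder h0c
    set φ : ℝ → ℝ := fun s => Real.exp (a * s) * (x₂ s - c) with hφ_def
    have hφ : ∀ s, HasDerivAt φ (Real.exp (a * s) * (b s - a * c)) s := by
      intro s
      have h1 := (hexp s).mul ((hx₂ s).sub_const c)
      refine h1.congr_deriv ?_
      rw [hb_def, ha_def]
      ring
    have hanti : Antitone φ := by
      apply antitone_of_deriv_nonpos
      · intro s; exact (hφ s).differentiableAt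
      · intro s; rw [(hφ s).deriv]; exact hder s
    have h2 : φ t ≤ φ 0 := hanti ht
    have h3 : φ 0 = x₂ 0 - c := by simp [hφ_def]
    have h4 : 0 < Real.exp (a * t) := Real.exp_pos _
    have h5 : φ t ≤ 0 := h2.trans (h3 ▸ h0c)
    by_contra h
    push_neg at h
    have : (0:ℝ) < φ t := mul_pos h4 (by linarith)
    linarith
  have habs0 := abs_le.1 h0
  have hupper : x₂ t ≤ M := by
    apply key M
    · intro s
      have := (hb s).2
      have h4 : 0 < Real.exp (a * s) := Real.exp_pos _
      nlinarith
    · linarith [habs0.2]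
  have hlower : -M ≤ x₂ t := by
    have : -(x₂ t) ≤ M := by
      have key2 : ∀ s, 0 ≤ Real.exp (a * s) * (b s + a * M) := by
        intro s
        have := (hb s).1
        have h4 : 0 < Real.exp (a * s) := Real.exp_pos _
        positivity
      -- use monotone argument for ψ s = exp(a s) * (x₂ s + M)
      set ψ : ℝ → ℝ := fun s => Real.exp (a * s) * (x₂ s + M) with hψ_def
      have hψ : ∀ s, HasDerivAt ψ (Real.exp (a * s) * (b s + a * M)) s := by
        intro s
        have h1 := (hexp s).mul ((hx₂ s).add_const M)
        refine h1.congr_deriv ?_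
        rw [hb_def, ha_def]
        ring
      have hmono : Monotone ψ := by
        apply monotone_of_deriv_nonneg
        · intro s; exact (hψ s).differentiableAt
        · intro s; rw [(hψ s).deriv]; exact key2 s
      have h2 : ψ 0 ≤ ψ t := hmono ht
      have h3 : ψ 0 = x₂ 0 + M := by simp [hψ_def]
      have h4 : 0 < Real.exp (a * t) := Real.exp_pos _
      have h5 : 0 ≤ x₂ 0 + M := by linarith [habs0.1]
      have h6 : 0 ≤ ψ t := by rw [← h3] at h5; linarith
      have h7 : 0 ≤ x₂ t + M := by
        by_contra h
        push_neg at h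
        have : ψ t < 0 := mul_neg_of_pos_of_neg h4 h
        linarith
      linarith
    linarith
  exact abs_le.2 ⟨hlower, hupper⟩
end

section
/- Let r₀, K, β_m, β_d > 0, and let x₁, x₂ : ℝ → ℝ with 0 ≤ x₁(t) ≤ K. Suppose y(t) = x₁(t) satisfies y'(t) = (r₀ y(t)/K + β_m x₂(t) e^{-x₂(t)²/w_m} - β_d u(t)) y(t)(1 - y(t)/K). If constants r̄₀ > r₀/K, β̄_m > β_m, β_d_low ∈ (0, β_d), and a bound |x₂(t)| ≤ b(t) hold, then under the control u(t) = (r̄₀ y(t) + β̄_m b(t) + η)/β_d_low with η > 0, one has d/dt(y(t)²) ≤ 2 y(t)² (1 - y(t)/K)(β̄_m(b(t) - b(t)) - η) = -2η y(t)²(1 - y(t)/K) ≤ 0 for all t ≥ 0. -/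
open Real

theorem stmt9 (r₀ K βm βd wm : ℝ) (hr₀ : 0 < r₀) (hK : 0 < K) (hβm : 0 < βm)
    (hβd : 0 < βd) (hwm : 0 < wm)
    (x₁ x₂ y u b : ℝ → ℝ) (hyx : y = x₁)
    (hx₁b : ∀ t, 0 ≤ x₁ t ∧ x₁ t ≤ K)
    (rbar0 βbarm βdl η : ℝ)
    (hrbar0 : rbar0 > r₀ / K) (hβbarm : βbarm > βm) (hβdl0 : 0 < βdl) (hβdl : βdl < βd)
    (hη : 0 < η)
    (hb : ∀ t, 0 ≤ t → |x₂ t| ≤ b t)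
    (hu : ∀ t, u t = (rbar0 * y t + βbarm * b t + η) / βdl)
    (hy : ∀ t, HasDerivAt y
      ((r₀ * y t / K + βm * x₂ t * Real.exp (-(x₂ t)^2 / wm) - βd * u t) *
        (y t * (1 - y t / K))) t) :
    ∀ t, 0 ≤ t →
      deriv (fun s => (y s)^2) t ≤ -2 * η * (y t)^2 * (1 - y t / K) ∧
      -2 * η * (y t)^2 * (1 - y t / K) ≤ 0 := by
  intro t ht
  obtain ⟨hy0, hyK⟩ := hx₁b t
  rw [← hyx] at hy0 hyK
  have h1K : 0 ≤ 1 - y t / K := by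
    rw [sub_nonneg, div_le_one hK]; exact hyK
  have hbt : 0 ≤ b t := le_trans (abs_nonneg _) (hb t ht)
  have hx2 : |x₂ t| ≤ b t := hb t ht
  have hu0 : 0 ≤ u t := by
    rw [hu t]
    apply div_nonneg _ hβdl0.le
    nlinarith [mul_nonneg (le_trans (div_nonneg hr₀.le hK.le) hrbar0.le) hy0,
      mul_nonneg (le_trans hβm.le hβbarm.le) hbt]
  have hβdu : βdl * u t ≤ βd * u t := by nlinarith
  have hβdlu : βdl * u t = rbar0 * y t + βbarm * b t + η := by
    rw [hu t]; field_simp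
  have hexple : Real.exp (-(x₂ t)^2 / wm) ≤ 1 := by
    rw [Real.exp_le_one_iff]
    apply div_nonpos_of_nonpos_of_nonneg _ hwm.le
    simp [sq_nonneg]
  have hexp0 : 0 < Real.exp (-(x₂ t)^2 / wm) := Real.exp_pos _
  have hterm : βm * x₂ t * Real.exp (-(x₂ t)^2 / wm) ≤ βbarm * b t := by
    have h1 : βm * x₂ t * Real.exp (-(x₂ t)^2 / wm) ≤ βm * |x₂ t| := by
      rcases le_or_gt (x₂ t) 0 with h | h
      · have : βm * x₂ t * Real.exp (-(x₂ t)^2 / wm) ≤ 0 := by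
          apply mul_nonpos_of_nonpos_of_nonneg _ hexp0.le
          nlinarith
        nlinarith [abs_nonneg (x₂ t)]
      · rw [abs_of_pos h]
        exact mul_le_of_le_one_right (mul_nonneg hβm.le h.le) hexple
    have h2 : βm * |x₂ t| ≤ βbarm * b t := by
      nlinarith [abs_nonneg (x₂ t)]
    linarith
  have hbr : r₀ * y t / K + βm * x₂ t * Real.exp (-(x₂ t)^2 / wm) - βd * u t ≤ -η := by
    have hr : r₀ * y t / K ≤ rbar0 * y t := by
      have heq : r₀ * y t / K = (r₀ / K) * y t := by ring
      rw [heq]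
      exact mul_le_mul_of_nonneg_right hrbar0.le hy0
    linarith [hβdu, hβdlu.ge, hβdlu.le]
  have hd : HasDerivAt (fun s => (y s)^2)
      (2 * y t * ((r₀ * y t / K + βm * x₂ t * Real.exp (-(x₂ t)^2 / wm) - βd * u t) *
        (y t * (1 - y t / K)))) t := by
    have := (hy t).fun_pow 2
    simpa [mul_comm, mul_assoc, mul_left_comm] using this
  constructor
  · rw [hd.deriv]
    have hP : 0 ≤ (y t)^2 * (1 - y t / K) := mul_nonneg (sq_nonneg _) h1K
    have h2 := mul_le_mul_of_nonneg_right hbr hP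
    have heq : 2 * y t * ((r₀ * y t / K + βm * x₂ t * Real.exp (-(x₂ t)^2 / wm)
        - βd * u t) * (y t * (1 - y t / K)))
        = 2 * ((r₀ * y t / K + βm * x₂ t * Real.exp (-(x₂ t)^2 / wm) - βd * u t)
          * ((y t)^2 * (1 - y t / K))) := by ring
    rw [heq]
    linarith
  · nlinarith [mul_nonneg (sq_nonneg (y t)) h1K]
end
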